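/- Let d ≥ 1 and let C be the complex matrix indexed by Fin d × (Fin d × Fin d) with entries C ((a,(b,c)), (a',(b',c'))) = (1/2)·(δ_{a b}·δ_{a' b'}·δ_{c c'} + δ_{a c}·δ_{a' c'}·δ_{b b'}), i.e. C = (1/2)(|I⟩⟩⟨⟨I|_{01} ⊗ I_2 + |I⟩⟩⟨⟨I|_{02} ⊗ I_1), the Choi matrix of the symmetrized partial trace channel from two d-dimensional systems to one. For a real number p ≥ 0, there exists a density matrix ρ₀ on Fin d such that (ρ₀ ⊗ I_{d²}) − p·C is positive semidefinite if and only if p ≤ 2/(d(d+1)). (The maximum probability of teleporting one copy of a state from two input copies in the future to the past is 2/(d(d+1)).) -/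

import Mathlib

open Matrix
open scoped Kronecker ComplexOrder

/-- The Choi matrix of the symmetrized partial trace channel from two d-dimensional
systems to one: C = (1/2)(|I⟩⟩⟨⟨I|_{01} ⊗ I_2 + |I⟩⟩⟨⟨I|_{02} ⊗ I_1). -/
noncomputable def Ctrace21 (d : ℕ) :
    Matrix (Fin d × (Fin d × Fin d)) (Fin d × (Fin d × Fin d)) ℂ :=
  Matrix.of fun p q =>
    (1 / 2) *
      ((if p.1 = p.2.1 then 1 else 0) * (if q.1 = q.2.1 then 1 else 0) *
          (if p.2.2 = q.2.2 then 1 else 0) +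
        (if p.1 = p.2.2 then 1 else 0) * (if q.1 = q.2.2 then 1 else 0) *
          (if p.2.1 = q.2.1 then 1 else 0))

/-! ### Auxiliary definitions and lemmas -/

noncomputable def Amat (d : ℕ) : Matrix (Fin d × (Fin d × Fin d)) (Fin d × (Fin d × Fin d)) ℂ :=
  Matrix.of fun p q => (if p.1 = p.2.1 then 1 else 0) * (if q.1 = q.2.1 then 1 else 0) *
    (if p.2.2 = q.2.2 then (1:ℂ) else 0)

noncomputable def Bmat (d : ℕ) : Matrix (Fin d × (Fin d × Fin d)) (Fin d × (Fin d × Fin d)) ℂ :=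
  Matrix.of fun p q => (if p.1 = p.2.2 then 1 else 0) * (if q.1 = q.2.2 then 1 else 0) *
    (if p.2.1 = q.2.1 then (1:ℂ) else 0)

lemma Ctrace21_eq (d : ℕ) : Ctrace21 d = (2:ℂ)⁻¹ • (Amat d + Bmat d) := by
  ext p q
  simp [Ctrace21, Amat, Bmat]

lemma Amat_mul_Amat (d : ℕ) : Amat d * Amat d = (d : ℂ) • Amat d := by
  ext p q
  simp [Amat, mul_apply, Fintype.sum_prod_type, ite_mul, mul_ite, Finset.sum_ite_eq,
    Finset.sum_ite_eq']
  split_ifs <;> rfl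

lemma Bmat_mul_Bmat (d : ℕ) : Bmat d * Bmat d = (d : ℂ) • Bmat d := by
  ext p q
  simp [Bmat, mul_apply, Fintype.sum_prod_type, ite_mul, mul_ite, Finset.sum_ite_eq,
    Finset.sum_ite_eq']
  split_ifs <;> rfl

lemma Amat_mul_Bmat_mul_Amat (d : ℕ) : Amat d * Bmat d * Amat d = Amat d := by
  ext p q
  simp [Amat, Bmat, mul_apply, Fintype.sum_prod_type, ite_mul, mul_ite, Finset.sum_ite_eq,
    Finset.sum_ite_eq']
  split_ifs <;> simp_all [eq_comm]

lemma Bmat_mul_Amat_mul_Bmat (d : ℕ) : Bmat d * Amat d * Bmat d = Bmat d := by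
  ext p q
  simp [Amat, Bmat, mul_apply, Fintype.sum_prod_type, ite_mul, mul_ite, Finset.sum_ite_eq,
    Finset.sum_ite_eq']
  split_ifs <;> simp_all [eq_comm]

lemma Amat_herm (d : ℕ) : (Amat d)ᴴ = Amat d := by
  ext p q
  simp [Amat, conjTranspose_apply]
  split_ifs <;> simp_all [eq_comm]

lemma Bmat_herm (d : ℕ) : (Bmat d)ᴴ = Bmat d := by
  ext p q
  simp [Bmat, conjTranspose_apply]
  split_ifs <;> simp_all [eq_comm]

theorem psd_smul {n : Type*} [Fintype n] {M : Matrix n n ℂ} (h : M.PosSemidef) {c : ℂ}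
    (hc : 0 ≤ c) : (c • M).PosSemidef := by
  refine Matrix.PosSemidef.of_dotProduct_mulVec_nonneg ?_ ?_
  · unfold Matrix.IsHermitian
    rw [conjTranspose_smul, h.1]
    congr 1
    rw [RCLike.star_def, Complex.conj_eq_iff_im]
    exact ((Complex.nonneg_iff.1 hc).2).symm
  · intro x
    rw [smul_mulVec, dotProduct_smul]
    exact mul_nonneg hc (h.dotProduct_mulVec_nonneg x)

section cube
variable {ι : Type*} [Fintype ι]
variable (A B : Matrix ι ι ℂ) (d : ℂ)

theorem cube_id (hAA : A * A = d • A) (hBB : B * B = d • B)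
    (hABA : A * B * A = A) (hBAB : B * A * B = B) :
    (A + B) * ((A + B) * (A + B)) = (2*d) • ((A+B)*(A+B)) - (d^2-1) • (A+B) := by
  have h1 : A * (B * A) = A := by rw [← mul_assoc]; exact hABA
  have h2 : B * (A * B) = B := by rw [← mul_assoc]; exact hBAB
  have h3 : A * (A * B) = d • (A * B) := by rw [← mul_assoc, hAA, Matrix.smul_mul]
  have h4 : B * (B * A) = d • (B * A) := by rw [← mul_assoc, hBB, Matrix.smul_mul]
  have h5 : A * (B * B) = d • (A * B) := by rw [hBB, Matrix.mul_smul]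
  have h6 : B * (A * A) = d • (B * A) := by rw [hAA, Matrix.mul_smul]
  have h7 : A * (A * A) = (d*d) • A := by rw [hAA, Matrix.mul_smul, hAA, smul_smul]
  have h8 : B * (B * B) = (d*d) • B := by rw [hBB, Matrix.mul_smul, hBB, smul_smul]
  simp only [mul_add, add_mul, mul_assoc, hAA, hBB, h1, h2, h3, h4, h5, h6, h7, h8,
    Matrix.mul_smul, smul_add, smul_smul]
  module

end cube

/-- PSD of `(d+1) • 1 - (A + B)`. -/
theorem X_psd (d : ℕ) (hd : 1 ≤ d) :
    (((d:ℂ)+1) • (1 : Matrix (Fin d × (Fin d × Fin d)) (Fin d × (Fin d × Fin d)) ℂ)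
      - (Amat d + Bmat d)).PosSemidef := by
  rcases eq_or_lt_of_le hd with h1 | h2
  · -- d = 1
    have hA : Amat d = 1 := by
      ext p q
      have : Subsingleton (Fin d) := by rw [← h1]; infer_instance
      simp [Amat, Matrix.one_apply, Subsingleton.elim p q, Subsingleton.elim p.1 p.2.1,
        Subsingleton.elim p.2.2 q.2.2, Subsingleton.elim q.1 q.2.1]
    have hB : Bmat d = 1 := by
      ext p q
      have : Subsingleton (Fin d) := by rw [← h1]; infer_instance
      simp [Bmat, Matrix.one_apply, Subsingleton.elim p q, Subsingleton.elim p.1 p.2.2,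
        Subsingleton.elim p.2.1 q.2.1, Subsingleton.elim q.1 q.2.2]
    have hd1 : (d : ℂ) = 1 := by rw [← h1]; norm_num
    have : (((d:ℂ)+1) • (1 : Matrix (Fin d × (Fin d × Fin d)) (Fin d × (Fin d × Fin d)) ℂ)
        - (Amat d + Bmat d)) = 0 := by
      rw [hA, hB, hd1]; module
    rw [this]
    exact Matrix.PosSemidef.zero
  · -- d ≥ 2
    have hd2 : 2 ≤ d := h2
    set R := Amat d + Bmat d with hR
    have hRherm : Rᴴ = R := by rw [hR, conjTranspose_add, Amat_herm, Bmat_herm]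
    have hcube : R * (R * R) = (2*(d:ℂ)) • (R*R) - ((d:ℂ)^2-1) • R :=
      cube_id _ _ _ (Amat_mul_Amat d) (Bmat_mul_Bmat d) (Amat_mul_Bmat_mul_Amat d)
        (Bmat_mul_Amat_mul_Bmat d)
    set Q₀ : Matrix (Fin d × (Fin d × Fin d)) (Fin d × (Fin d × Fin d)) ℂ :=
      R * R - (2*(d:ℂ)) • R + ((d:ℂ)^2-1) • 1 with hQ₀
    set Q₁ : Matrix (Fin d × (Fin d × Fin d)) (Fin d × (Fin d × Fin d)) ℂ :=
      ((d:ℂ)+1) • R - R * R with hQ₁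
    have hQ₀R : Q₀ * R = 0 := by
      rw [hQ₀]
      simp only [sub_mul, add_mul, Matrix.smul_mul, one_mul, mul_assoc, hcube]
      module
    have hQ₀sq : Q₀ * Q₀ = ((d:ℂ)^2-1) • Q₀ := by
      have expand : Q₀ * Q₀ = Q₀ * (R * R) - (2*(d:ℂ)) • (Q₀ * R) + ((d:ℂ)^2-1) • Q₀ := by
        nth_rewrite 2 [hQ₀]
        simp only [mul_sub, mul_add, Matrix.mul_smul, mul_one]
      rw [expand, ← mul_assoc, hQ₀R]
      simp
    have hRQ₁ : R * Q₁ = ((d:ℂ)-1) • Q₁ := by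
      rw [hQ₁]
      simp only [mul_sub, Matrix.mul_smul, hcube]
      module
    have hQ₁sq : Q₁ * Q₁ = (2*(d:ℂ)-2) • Q₁ := by
      have expand : Q₁ * Q₁ = ((d:ℂ)+1) • (R * Q₁) - R * (R * Q₁) := by
        nth_rewrite 1 [hQ₁]
        simp only [sub_mul, Matrix.smul_mul, mul_assoc]
      rw [expand, hRQ₁, Matrix.mul_smul, hRQ₁, smul_smul]
      module
    have hQ₀herm : Q₀ᴴ = Q₀ := by
      rw [hQ₀]
      simp [conjTranspose_add, conjTranspose_sub, conjTranspose_smul, conjTranspose_mul,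
        hRherm, star_sub, star_pow, star_one]
    have hQ₁herm : Q₁ᴴ = Q₁ := by
      rw [hQ₁]
      simp [conjTranspose_sub, conjTranspose_smul, conjTranspose_mul, hRherm, star_add, star_one]
    have hpos1 : (0:ℝ) < (d:ℝ)^2 - 1 := by
      have : (2:ℝ) ≤ d := by exact_mod_cast hd2
      nlinarith
    have hpos2 : (0:ℝ) < 2*(d:ℝ) - 2 := by
      have : (2:ℝ) ≤ d := by exact_mod_cast hd2
      nlinarith
    have hQ₀psd : Q₀.PosSemidef := by
      have h := Matrix.posSemidef_conjTranspose_mul_self Q₀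
      rw [hQ₀herm, hQ₀sq] at h
      have hcc : ((d:ℂ)^2-1) = ((((d:ℝ)^2-1) : ℝ) : ℂ) := by push_cast; ring
      have : Q₀ = ((((d:ℝ)^2-1)⁻¹ : ℝ) : ℂ) • (((d:ℂ)^2-1) • Q₀) := by
        rw [smul_smul, hcc, ← Complex.ofReal_mul, inv_mul_cancel₀ (ne_of_gt hpos1),
          Complex.ofReal_one, one_smul]
      rw [this]
      exact psd_smul h (Complex.zero_le_real.2 (by positivity))
    have hQ₁psd : Q₁.PosSemidef := by
      have h := Matrix.posSemidef_conjTranspose_mul_self Q₁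
      rw [hQ₁herm, hQ₁sq] at h
      have hcc : (2*(d:ℂ)-2) = (((2*(d:ℝ)-2) : ℝ) : ℂ) := by push_cast; ring
      have : Q₁ = (((2*(d:ℝ)-2)⁻¹ : ℝ) : ℂ) • ((2*(d:ℂ)-2) • Q₁) := by
        rw [smul_smul, hcc, ← Complex.ofReal_mul, inv_mul_cancel₀ (ne_of_gt hpos2),
          Complex.ofReal_one, one_smul]
      rw [this]
      exact psd_smul h (Complex.zero_le_real.2 (by positivity))
    have hdne : ((d:ℂ) - 1) ≠ 0 := by
      intro h
      have : (d:ℂ) = 1 := by linear_combination h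
      have : (d:ℝ) = 1 := by exact_mod_cast this
      nlinarith [show (2:ℝ) ≤ d from by exact_mod_cast hd2]
    have hX' : ((d:ℂ)-1) • (((d:ℂ)+1) • (1 : Matrix (Fin d × (Fin d × Fin d)) (Fin d × (Fin d × Fin d)) ℂ) - R)
        = Q₀ + Q₁ := by
      rw [hQ₀, hQ₁]
      module
    have hX : ((d:ℂ)+1) • (1 : Matrix (Fin d × (Fin d × Fin d)) (Fin d × (Fin d × Fin d)) ℂ) - R
        = ((d:ℂ)-1)⁻¹ • (Q₀ + Q₁) := by
      rw [← hX', smul_smul, inv_mul_cancel₀ hdne, one_smul]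
    rw [hX]
    have hinv : ((d:ℂ)-1)⁻¹ = ((((d:ℝ)-1)⁻¹ : ℝ) : ℂ) := by push_cast; ring
    rw [hinv]
    exact psd_smul (hQ₀psd.add hQ₁psd) (Complex.zero_le_real.2
      (inv_nonneg.2 (by nlinarith [show (2:ℝ) ≤ d from by exact_mod_cast hd2])))

noncomputable def wvec (d : ℕ) (c : Fin d) : Fin d × (Fin d × Fin d) → ℂ :=
  fun q => (if q.1 = q.2.1 then 1 else 0) * (if q.2.2 = c then 1 else 0) +
    (if q.1 = q.2.2 then 1 else 0) * (if q.2.1 = c then 1 else 0)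

lemma wvec_C (d : ℕ) (c : Fin d) :
    star (wvec d c) ⬝ᵥ (Ctrace21 d *ᵥ wvec d c) = ((d:ℂ)+1)^2 := by
  simp [wvec, Ctrace21, dotProduct, mulVec, Fintype.sum_prod_type, mul_add, add_mul,
    ite_mul, mul_ite, Finset.sum_ite_eq, Finset.sum_ite_eq', Finset.mul_sum,
    Finset.sum_add_distrib, apply_ite (starRingEnd ℂ), Finset.sum_ite_irrel]
  ring

lemma wvec_rho (d : ℕ) (c : Fin d) (ρ : Matrix (Fin d) (Fin d) ℂ) :
    star (wvec d c) ⬝ᵥ ((ρ ⊗ₖ (1 : Matrix (Fin d × Fin d) (Fin d × Fin d) ℂ)) *ᵥ wvec d c)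
      = 2 * ρ.trace + 2 * ρ c c := by
  simp [wvec, Matrix.kroneckerMap_apply, Matrix.one_apply, Matrix.trace, Matrix.diag,
    dotProduct, mulVec, Fintype.sum_prod_type, mul_add, add_mul,
    ite_mul, mul_ite, Finset.sum_ite_eq, Finset.sum_ite_eq', Finset.mul_sum,
    Finset.sum_add_distrib, apply_ite (starRingEnd ℂ), Finset.sum_ite_irrel, Prod.ext_iff,
    ite_and, Finset.mul_sum]
  rw [← Finset.mul_sum]
  ring

/-- The maximum probability of teleporting one copy of a state from two input copies in
the future to the past is 2/(d(d+1)). -/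
theorem trace_two_to_one_sim_prob (d : ℕ) (hd : 1 ≤ d) (p : ℝ) (hp : 0 ≤ p) :
    (∃ ρ₀ : Matrix (Fin d) (Fin d) ℂ, ρ₀.PosSemidef ∧ ρ₀.trace = 1 ∧
        (ρ₀ ⊗ₖ (1 : Matrix (Fin d × Fin d) (Fin d × Fin d) ℂ) -
          (p : ℂ) • Ctrace21 d).PosSemidef)
      ↔ p ≤ 2 / ((d : ℝ) * (d + 1)) := by
  have hdR : (1:ℝ) ≤ (d:ℝ) := by exact_mod_cast hd
  have hdpos : (0:ℝ) < d := by linarith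
  constructor
  · rintro ⟨ρ₀, hpsd, htr, hM⟩
    -- for each c, the quadratic form gives p*(d+1)^2 ≤ 2 + 2*(ρ₀ c c).re
    have key : ∀ c : Fin d, p * ((d:ℝ)+1)^2 ≤ 2 + 2 * (ρ₀ c c).re := by
      intro c
      have h0 := hM.dotProduct_mulVec_nonneg (wvec d c)
      rw [sub_mulVec, dotProduct_sub, smul_mulVec, dotProduct_smul, smul_eq_mul,
        wvec_C, wvec_rho, htr] at h0
      have hre : ((p:ℂ) * ((d:ℂ)+1)^2).re = p * ((d:ℝ)+1)^2 := by
        have h' : (p:ℂ) * ((d:ℂ)+1)^2 = ((p * ((d:ℝ)+1)^2 : ℝ) : ℂ) := by push_cast; ring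
        rw [h', Complex.ofReal_re]
      have h0re := (Complex.le_def.1 h0).1
      rw [Complex.zero_re] at h0re
      have hre2 : ((2 * (1:ℂ) + 2 * ρ₀ c c) - (p:ℂ) * ((d:ℂ)+1)^2).re
          = 2 + 2 * (ρ₀ c c).re - p * ((d:ℝ)+1)^2 := by
        simp [Complex.sub_re, Complex.add_re, Complex.mul_re, hre]
      rw [hre2] at h0re
      linarith
    -- sum over c
    have hsum : (d:ℝ) * (p * ((d:ℝ)+1)^2) ≤ 2 * d + 2 := by
      have h1 : ∑ c : Fin d, (p * ((d:ℝ)+1)^2) ≤ ∑ c : Fin d, (2 + 2 * (ρ₀ c c).re) :=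
        Finset.sum_le_sum fun c _ => key c
      have h2 : ∑ c : Fin d, (p * ((d:ℝ)+1)^2) = (d:ℝ) * (p * ((d:ℝ)+1)^2) := by
        simp [Finset.sum_const, Finset.card_univ, nsmul_eq_mul]
      have h3 : (∑ c : Fin d, (ρ₀ c c).re) = 1 := by
        have := congrArg Complex.re htr
        simpa [Matrix.trace, Matrix.diag, Complex.re_sum] using this
      have h4 : ∑ c : Fin d, (2 + 2 * (ρ₀ c c).re) = 2 * d + 2 := by
        rw [Finset.sum_add_distrib, ← Finset.mul_sum, h3]
        simp [Finset.sum_const, Finset.card_univ, nsmul_eq_mul]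
        try ring
      rw [h2, h4] at h1
      exact h1
    rw [le_div_iff₀ (by positivity)]
    nlinarith [hsum, mul_nonneg hp (by positivity : (0:ℝ) ≤ (d:ℝ)+1)]
  · intro hple
    refine ⟨((d:ℝ)⁻¹ : ℝ) • (1 : Matrix (Fin d) (Fin d) ℂ), ?_, ?_, ?_⟩
    · exact psd_smul Matrix.PosSemidef.one (Complex.zero_le_real.2 (by positivity))
    · rw [Matrix.trace_smul, Matrix.trace_one]
      have hdc : (d:ℂ) ≠ 0 := Nat.cast_ne_zero.2 (by omega)
      simp [Fintype.card_fin]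
      exact inv_mul_cancel₀ hdc
    · have hkron : (((d:ℝ)⁻¹ : ℝ) • (1 : Matrix (Fin d) (Fin d) ℂ)) ⊗ₖ
          (1 : Matrix (Fin d × Fin d) (Fin d × Fin d) ℂ)
          = ((d:ℝ)⁻¹ : ℝ) • (1 : Matrix (Fin d × (Fin d × Fin d)) (Fin d × (Fin d × Fin d)) ℂ) := by
        rw [Matrix.smul_kronecker, Matrix.one_kronecker_one]
      rw [hkron, Ctrace21_eq]
      set c₁ : ℝ := (d:ℝ)⁻¹ - p * ((d:ℝ)+1)/2 with hc₁
      have hc₁nn : 0 ≤ c₁ := by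
        rw [hc₁]
        have h1 : p * ((d:ℝ)+1)/2 ≤ (2 / ((d : ℝ) * (d + 1))) * ((d:ℝ)+1)/2 := by
          have := mul_le_mul_of_nonneg_right hple (by positivity : (0:ℝ) ≤ ((d:ℝ)+1)/2)
          linarith [this]
        have h2 : (2 / ((d : ℝ) * (d + 1))) * ((d:ℝ)+1)/2 = (d:ℝ)⁻¹ := by
          field_simp
        linarith [h1, h2 ▸ h1]
      have hid : ((d:ℝ)⁻¹ : ℝ) • (1 : Matrix (Fin d × (Fin d × Fin d)) (Fin d × (Fin d × Fin d)) ℂ)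
          - (p : ℂ) • ((2:ℂ)⁻¹ • (Amat d + Bmat d))
          = ((c₁ : ℝ) : ℂ) • (1 : Matrix (Fin d × (Fin d × Fin d)) (Fin d × (Fin d × Fin d)) ℂ)
            + (((p/2 : ℝ)) : ℂ) • (((d:ℂ)+1) • 1 - (Amat d + Bmat d)) := by
        rw [hc₁]
        push_cast
        match_scalars <;> ring
      rw [hid]
      refine Matrix.PosSemidef.add (psd_smul Matrix.PosSemidef.one ?_)
        (psd_smul (X_psd d hd) ?_)
      · exact Complex.zero_le_real.2 hc₁nn
      · exact Complex.zero_le_real.2 (by positivity)
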